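/- For every matrix A ∈ GL_n(ℂ) there exists an invertible diagonal matrix D ∈ GL_n(ℂ) such that A * D has n distinct eigenvalues. -/

import Mathlib

open Polynomial Matrix Finset

noncomputable section

private lemma card_roots_eq (p : ℂ[X]) : p.roots.card = p.natDegree := by
  exact splits_iff_card_roots.mp (IsAlgClosed.splits p)

private lemma pen (f q : ℂ[X]) (hf : f.Monic) (hq0 : q ≠ 0) (hdeg : q.degree < f.degree)
    (l : ℂ) (hm2 : 2 ≤ rootMultiplicity l f)
    (hdvd : ¬ (X - C l) ^ (rootMultiplicity l f) ∣ q) (E : Finset ℂ) :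
    ∃ s : ℂ, s ∉ E ∧ f.roots.toFinset.card < (f - C s * q).roots.toFinset.card := by
  classical
  have hf0 : f ≠ 0 := hf.ne_zero
  set m := rootMultiplicity l f with hm
  set g : ℂ[X] := gcd f q with hg
  have hgf : g ∣ f := gcd_dvd_left f q
  have hgq : g ∣ q := gcd_dvd_right f q
  have hg0 : g ≠ 0 := gcd_ne_zero_of_left hf0
  set f1 : ℂ[X] := f / g with hf1def
  set q1 : ℂ[X] := q / g with hq1def
  have hff : g * f1 = f := EuclideanDomain.mul_div_cancel' hg0 hgf
  have hqq : g * q1 = q := EuclideanDomain.mul_div_cancel' hg0 hgq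
  have cop : IsCoprime f1 q1 := isCoprime_div_gcd_div_gcd hq0
  have hf10 : f1 ≠ 0 := left_div_gcd_ne_zero hf0
  have hq10 : q1 ≠ 0 := right_div_gcd_ne_zero hq0
  have hnd_f : g.natDegree + f1.natDegree = f.natDegree := by
    rw [← natDegree_mul hg0 hf10, hff]
  have hnd_q : g.natDegree + q1.natDegree = q.natDegree := by
    rw [← natDegree_mul hg0 hq10, hqq]
  have hqf : q.natDegree < f.natDegree := natDegree_lt_natDegree hq0 hdeg
  have h1f1 : q1.natDegree < f1.natDegree := by omega
  have hdeg_q1f1 : q1.degree < f1.degree := degree_lt_degree h1f1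
  -- Wronskian
  set W : ℂ[X] := f1 * derivative q1 - derivative f1 * q1 with hW
  have hW0 : W ≠ 0 := by
    intro h0
    have hEq : f1 * derivative q1 = derivative f1 * q1 := sub_eq_zero.mp h0
    have hdvd1 : f1 ∣ derivative f1 * q1 := ⟨derivative q1, hEq.symm⟩
    have hdvd2 : f1 ∣ derivative f1 := cop.dvd_of_dvd_mul_right hdvd1
    have hne : derivative f1 ≠ 0 := by
      intro hz
      have := natDegree_eq_zero_of_derivative_eq_zero hz
      omega
    have h2 := natDegree_le_of_dvd hdvd2 hne
    have h3 := natDegree_derivative_lt (p := f1) (by omega)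
    omega
  set bad : Finset ℂ := E ∪ (W.roots.toFinset ∪ f.roots.toFinset).image
      (fun x => f1.eval x / q1.eval x) with hbad
  obtain ⟨s, hs⟩ := Infinite.exists_notMem_finset bad
  refine ⟨s, fun hsE => hs (Finset.mem_union_left _ hsE), ?_⟩
  set hsp : ℂ[X] := f1 - C s * q1 with hhs
  have hnc : ∀ x : ℂ, ¬ (f1.eval x = 0 ∧ q1.eval x = 0) := by
    rintro x ⟨h1, h2⟩
    obtain ⟨a, b, hab⟩ := cop
    have := congrArg (eval x) hab
    simp [h1, h2] at this
  have hroot_s : ∀ x : ℂ, hsp.eval x = 0 → q1.eval x ≠ 0 ∧ s = f1.eval x / q1.eval x := by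
    intro x hx
    have hfx : f1.eval x = s * q1.eval x := by
      have h' : f1.eval x - s * q1.eval x = 0 := by
        simpa [hhs] using hx
      exact sub_eq_zero.mp h'
    have hq1x : q1.eval x ≠ 0 := by
      intro h0
      exact hnc x ⟨by rw [hfx, h0, mul_zero], h0⟩
    refine ⟨hq1x, ?_⟩
    rw [hfx]
    field_simp
  -- degrees of hsp
  have hdegCs : (C s * q1).degree < f1.degree := by
    by_cases hs0 : s = 0
    · rw [hs0, map_zero, zero_mul, degree_zero]
      exact bot_lt_iff_ne_bot.mpr (fun h => hf10 (degree_eq_bot.mp h))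
    · rw [degree_C_mul hs0]
      exact hdeg_q1f1
  have hdeg_hsp : hsp.degree = f1.degree := degree_sub_eq_left_of_degree_lt hdegCs
  have hsp0 : hsp ≠ 0 := by
    intro h
    rw [h, degree_zero] at hdeg_hsp
    exact hf10 (degree_eq_bot.mp hdeg_hsp.symm)
  have hnd_hsp : hsp.natDegree = f1.natDegree := natDegree_eq_of_degree_eq hdeg_hsp
  -- separability
  have hsep : hsp.Separable := by
    by_contra hns
    have hgu : ¬ IsUnit (gcd hsp (derivative hsp)) := fun h => hns ((gcd_isUnit_iff _ _).mp h)
    have hdeg0 : (gcd hsp (derivative hsp)).degree ≠ 0 := fun h =>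
      hgu (isUnit_iff_degree_eq_zero.mpr h)
    obtain ⟨x, hx⟩ := IsAlgClosed.exists_root _ hdeg0
    have hx1 : hsp.eval x = 0 := by
      obtain ⟨c, hc⟩ := gcd_dvd_left hsp (derivative hsp)
      rw [hc, eval_mul, hx, zero_mul]
    have hx2 : (derivative hsp).eval x = 0 := by
      obtain ⟨c, hc⟩ := gcd_dvd_right hsp (derivative hsp)
      rw [hc, eval_mul, hx, zero_mul]
    obtain ⟨hq1x, hsx⟩ := hroot_s x hx1
    have hfx : f1.eval x = s * q1.eval x := by
      have h' : f1.eval x - s * q1.eval x = 0 := by simpa [hhs] using hx1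
      exact sub_eq_zero.mp h'
    have hdx : (derivative f1).eval x = s * (derivative q1).eval x := by
      have h' : (derivative f1).eval x - s * (derivative q1).eval x = 0 := by
        have : derivative hsp = derivative f1 - C s * derivative q1 := by
          rw [hhs, derivative_sub, derivative_C_mul]
        rw [this] at hx2
        simpa using hx2
      exact sub_eq_zero.mp h'
    have hWx : W.eval x = 0 := by
      rw [hW]
      simp only [eval_sub, eval_mul]
      rw [hfx, hdx]
      ring
    have hxW : x ∈ W.roots.toFinset := by
      rw [Multiset.mem_toFinset, mem_roots hW0]
      exact hWx
    apply hs
    apply Finset.mem_union_right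
    exact Finset.mem_image.mpr ⟨x, Finset.mem_union_left _ hxW, hsx.symm⟩
  -- disjointness of roots of g and hsp
  have hdisj : Disjoint g.roots.toFinset hsp.roots.toFinset := by
    rw [Finset.disjoint_left]
    intro x hxg hxh
    have hx1 : hsp.eval x = 0 := by
      rw [Multiset.mem_toFinset, mem_roots hsp0] at hxh
      exact hxh
    obtain ⟨hq1x, hsx⟩ := hroot_s x hx1
    have hxgr : g.eval x = 0 := by
      rw [Multiset.mem_toFinset, mem_roots hg0] at hxg
      exact hxg
    have hxf : f.eval x = 0 := by rw [← hff, eval_mul, hxgr, zero_mul]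
    have hxT : x ∈ f.roots.toFinset := by
      rw [Multiset.mem_toFinset, mem_roots hf0]
      exact hxf
    apply hs
    apply Finset.mem_union_right
    exact Finset.mem_image.mpr ⟨x, Finset.mem_union_right _ hxT, hsx.symm⟩
  -- factorization of the new polynomial
  have hFskey : f - C s * q = g * hsp := by
    rw [hhs, ← hff, ← hqq]
    ring
  have hF0 : g * hsp ≠ 0 := mul_ne_zero hg0 hsp0
  have hcard_new : (f - C s * q).roots.toFinset.card
      = g.roots.toFinset.card + f1.natDegree := by
    rw [hFskey, roots_mul hF0, Multiset.toFinset_add, Finset.card_union_of_disjoint hdisj]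
    congr 1
    rw [Multiset.toFinset_card_of_nodup (nodup_roots hsep), card_roots_eq, hnd_hsp]
  rw [hcard_new]
  -- counting
  have hgleF : g.roots ≤ f.roots := roots.le_of_dvd hf0 hgf
  have hTgT : g.roots.toFinset ⊆ f.roots.toFinset := fun x hx =>
    Multiset.mem_toFinset.mpr (Multiset.mem_of_le hgleF (Multiset.mem_toFinset.mp hx))
  have h1 : ∑ μ ∈ f.roots.toFinset, f.roots.count μ = f.natDegree := by
    rw [Multiset.toFinset_sum_count_eq, card_roots_eq]
  have h2 : ∑ μ ∈ f.roots.toFinset, g.roots.count μ = g.natDegree := by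
    rw [← Finset.sum_subset hTgT
      (fun x _ hx => Multiset.count_eq_zero_of_notMem (fun hmem => hx (Multiset.mem_toFinset.mpr hmem)))]
    rw [Multiset.toFinset_sum_count_eq, card_roots_eq]
  have h3 : ∑ μ ∈ f.roots.toFinset, (if μ ∈ g.roots.toFinset then 1 else 0)
      = g.roots.toFinset.card := by
    rw [← Finset.sum_subset hTgT (fun x _ hx => if_neg hx)]
    rw [Finset.sum_congr rfl (fun x hx => if_pos hx)]
    simp
  have hlam_m : f.roots.count l = m := count_roots f
  have hlamT : l ∈ f.roots.toFinset := by
    rw [Multiset.mem_toFinset, mem_roots hf0]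
    exact ((rootMultiplicity_pos hf0).mp (by omega))
  have hcg_lt : g.roots.count l < m := by
    have hgqr : g.roots ≤ q.roots := roots.le_of_dvd hq0 hgq
    have hle : g.roots.count l ≤ q.roots.count l := Multiset.le_iff_count.mp hgqr l
    have hqm : q.roots.count l < m := by
      rw [count_roots]
      by_contra hge
      push_neg at hge
      exact hdvd (dvd_trans (pow_dvd_pow _ hge) (pow_rootMultiplicity_dvd q l))
    omega
  have hsum : ∑ μ ∈ f.roots.toFinset, (1 + g.roots.count μ)
      < ∑ μ ∈ f.roots.toFinset, ((if μ ∈ g.roots.toFinset then 1 else 0) + f.roots.count μ) := by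
    apply Finset.sum_lt_sum
    · intro μ hμ
      have hc1 : 1 ≤ f.roots.count μ :=
        Multiset.one_le_count_iff_mem.mpr (Multiset.mem_toFinset.mp hμ)
      by_cases hμg : μ ∈ g.roots.toFinset
      · have hle : g.roots.count μ ≤ f.roots.count μ := Multiset.le_iff_count.mp hgleF μ
        rw [if_pos hμg]
        omega
      · have hzero : g.roots.count μ = 0 :=
          Multiset.count_eq_zero_of_notMem (fun h => hμg (Multiset.mem_toFinset.mpr h))
        rw [if_neg hμg, hzero]
        omega
    · refine ⟨l, hlamT, ?_⟩
      by_cases hlg : l ∈ g.roots.toFinset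
      · rw [if_pos hlg, hlam_m]
        omega
      · have hzero : g.roots.count l = 0 :=
          Multiset.count_eq_zero_of_notMem (fun h => hlg (Multiset.mem_toFinset.mpr h))
        rw [if_neg hlg, hzero, hlam_m]
        omega
  rw [Finset.sum_add_distrib, Finset.sum_add_distrib, h1, h2, h3] at hsum
  have hTcard : ∑ _μ ∈ f.roots.toFinset, 1 = f.roots.toFinset.card := by simp
  rw [hTcard] at hsum
  omega





private lemma derivative_finset_prod {ι : Type*} [DecidableEq ι] (s : Finset ι) (f : ι → ℂ[X]) :
    derivative (∏ i ∈ s, f i) = ∑ i ∈ s, (∏ j ∈ s.erase i, f j) * derivative (f i) := by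
  induction s using Finset.induction_on with
  | empty => simp
  | @insert a s ha ih =>
    rw [Finset.prod_insert ha, derivative_mul, ih, Finset.sum_insert ha, Finset.erase_insert ha,
      Finset.mul_sum]
    congr 1
    · ring
    · apply Finset.sum_congr rfl
      intro i hi
      have hai : a ≠ i := fun h => ha (h ▸ hi)
      rw [Finset.erase_insert_of_ne hai, Finset.prod_insert (fun h => ha (Finset.mem_of_mem_erase h))]
      ring

private lemma derivative_det {k : ℕ} (M : Matrix (Fin k) (Fin k) ℂ[X]) :
    derivative M.det = ∑ j, (M.updateCol j (fun i => derivative (M i j))).det := by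
  classical
  rw [Matrix.det_apply, map_sum]
  have hterm : ∀ σ : Equiv.Perm (Fin k),
      derivative (Equiv.Perm.sign σ • ∏ i, M (σ i) i)
        = ∑ j, Equiv.Perm.sign σ • ((∏ i ∈ Finset.univ.erase j, M (σ i) i) * derivative (M (σ j) j)) := by
    intro σ
    rw [Units.smul_def, map_zsmul, derivative_finset_prod]
    rw [Finset.smul_sum]
    apply Finset.sum_congr rfl
    intro j _
    rw [Units.smul_def]
  rw [Finset.sum_congr rfl (fun σ _ => hterm σ), Finset.sum_comm]
  apply Finset.sum_congr rfl
  intro j _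
  rw [Matrix.det_apply]
  apply Finset.sum_congr rfl
  intro σ _
  congr 1
  rw [← Finset.mul_prod_erase Finset.univ _ (Finset.mem_univ j)]
  rw [Matrix.updateCol_apply]
  simp only [if_pos rfl]
  rw [mul_comm]
  congr 1
  apply Finset.prod_congr rfl
  intro i hi
  rw [Matrix.updateCol_apply, if_neg (Finset.ne_of_mem_erase hi)]


variable {n : ℕ}

private def betaM (Am : Matrix (Fin n) (Fin n) ℂ) (d : Fin n → ℂ) (j : Fin n) : ℂ[X] :=
  ((charmatrix (Am * diagonal d)).updateCol j (fun i => C (Am i j))).det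

private def alphaM (Am : Matrix (Fin n) (Fin n) ℂ) (d : Fin n → ℂ) (j : Fin n) : ℂ[X] :=
  ((charmatrix (Am * diagonal d)).updateCol j (fun i => if i = j then X else 0)).det

private lemma charmatrix_update (Am : Matrix (Fin n) (Fin n) ℂ) (d : Fin n → ℂ) (j : Fin n)
    (y : ℂ) :
    charmatrix (Am * diagonal (Function.update d j y)) =
      (charmatrix (Am * diagonal d)).updateCol j
        (fun i => (if i = j then (X : ℂ[X]) else 0) - C y * C (Am i j)) := by
  ext i k
  by_cases hk : k = j
  · subst hk
    rw [Matrix.updateCol_apply, if_pos rfl, charmatrix_apply, Matrix.mul_diagonal,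
      Function.update_self, Matrix.diagonal_apply, C_mul, mul_comm (C (Am i k)) (C y)]
  · rw [Matrix.updateCol_apply, if_neg hk, charmatrix_apply, charmatrix_apply,
      Matrix.mul_diagonal, Matrix.mul_diagonal, Function.update_of_ne hk]

private lemma charpoly_update_eq (Am : Matrix (Fin n) (Fin n) ℂ) (d : Fin n → ℂ) (j : Fin n)
    (y : ℂ) :
    (Am * diagonal (Function.update d j y)).charpoly
      = alphaM Am d j - C y * betaM Am d j := by
  have h0 : (Am * diagonal (Function.update d j y)).charpoly
      = (charmatrix (Am * diagonal (Function.update d j y))).det := rfl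
  rw [h0, charmatrix_update]
  have hcol : (fun i => (if i = j then (X : ℂ[X]) else 0) - C y * C (Am i j))
      = (fun i => if i = j then (X : ℂ[X]) else 0) + (-(C y)) • (fun i => C (Am i j)) := by
    funext i
    simp [Pi.add_apply, Pi.smul_apply, smul_eq_mul]
    ring
  rw [hcol, Matrix.det_updateCol_add, Matrix.det_updateCol_smul]
  unfold alphaM betaM
  ring

private lemma P_eq (Am : Matrix (Fin n) (Fin n) ℂ) (d : Fin n → ℂ) (j : Fin n) :
    (Am * diagonal d).charpoly = alphaM Am d j - C (d j) * betaM Am d j := by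
  have := charpoly_update_eq Am d j (d j)
  rwa [Function.update_eq_self] at this

private lemma euler_id (Am : Matrix (Fin n) (Fin n) ℂ) (d : Fin n → ℂ) :
    ∑ j, C (d j) * betaM Am d j
      = X * derivative (Am * diagonal d).charpoly - C (n : ℂ) * (Am * diagonal d).charpoly := by
  have h1 : ∀ j, C (d j) * betaM Am d j = alphaM Am d j - (Am * diagonal d).charpoly := by
    intro j
    linear_combination (P_eq Am d j)
  have h3 : ∀ j : Fin n, alphaM Am d j
      = X * ((charmatrix (Am * diagonal d)).updateCol j
          (fun i => derivative ((charmatrix (Am * diagonal d)) i j))).det := by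
    intro j
    have hder : (fun i => derivative ((charmatrix (Am * diagonal d)) i j))
        = fun i => if i = j then (1 : ℂ[X]) else 0 := by
      funext i
      rw [charmatrix_apply, Matrix.diagonal_apply]
      by_cases h : i = j <;> simp [h]
    have hcol : (fun i => if i = j then (X : ℂ[X]) else 0)
        = (X : ℂ[X]) • (fun i => if i = j then (1 : ℂ[X]) else 0) := by
      funext i
      by_cases h : i = j <;> simp [h]
    rw [hder]
    unfold alphaM
    rw [hcol, Matrix.det_updateCol_smul]
  have h2 : ∑ j, alphaM Am d j = X * derivative (Am * diagonal d).charpoly := by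
    rw [Finset.sum_congr rfl (fun j _ => h3 j), ← Finset.mul_sum]
    congr 1
    have h4 : (Am * diagonal d).charpoly = (charmatrix (Am * diagonal d)).det := rfl
    rw [h4, derivative_det]
  rw [Finset.sum_congr rfl (fun j _ => h1 j), Finset.sum_sub_distrib, h2, Finset.sum_const,
    Finset.card_univ, Fintype.card_fin, nsmul_eq_mul, C_eq_natCast]


private lemma euler_contra (p u : ℂ[X]) (l : ℂ) (hl0 : l ≠ 0) (k n : ℕ)
    (hu : p = (X - C l) ^ (k + 1 + 1) * u) (hund : ¬ (X - C l) ∣ u)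
    (hdvdsum : (X - C l) ^ (k + 1 + 1) ∣ X * derivative p - C (n : ℂ) * p) : False := by
  set V : ℂ[X] := C ((k : ℂ) + 2) * X * u + (X - C l) * (X * derivative u - C (n : ℂ) * u)
    with hV
  have hpow : (X - C l) ^ (k + 1 + 1) = (X - C l) ^ (k + 1) * (X - C l) := pow_succ _ _
  have hfact : X * derivative p - C (n : ℂ) * p = (X - C l) ^ (k + 1) * V := by
    rw [hu, derivative_mul, derivative_pow, derivative_X_sub_C, hV, hpow]
    simp only [Nat.add_sub_cancel]
    push_cast
    ring_nf
  have hdvdV : (X - C l) ∣ V := by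
    have h1 : (X - C l) ^ (k + 1) * (X - C l) ∣ (X - C l) ^ (k + 1) * V := by
      rw [← hpow, ← hfact]
      exact hdvdsum
    exact (mul_dvd_mul_iff_left (pow_ne_zero _ (X_sub_C_ne_zero l))).mp h1
  have hul : u.eval l ≠ 0 := fun h => hund (dvd_iff_isRoot.mpr h)
  have hVl : V.eval l = 0 := by
    obtain ⟨c, hc⟩ := hdvdV
    rw [hc, eval_mul, eval_sub, eval_X, eval_C, sub_self, zero_mul]
  rw [hV] at hVl
  simp only [eval_add, eval_mul, eval_sub, eval_X, eval_C, sub_self, zero_mul, add_zero] at hVl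
  have hk2 : ((k : ℂ) + 2) ≠ 0 := by
    have : ((k : ℂ) + 2) = ((k + 2 : ℕ) : ℂ) := by push_cast; ring
    rw [this]
    exact Nat.cast_ne_zero.mpr (by omega)
  exact (mul_ne_zero (mul_ne_zero hk2 hl0) hul) hVl

theorem exists_diag_mul_distinct_eigenvalues (n : ℕ) (A : GL (Fin n) ℂ) :
    ∃ D : Matrix (Fin n) (Fin n) ℂ, D.IsDiag ∧ IsUnit D ∧
      (Matrix.charpoly ((A : Matrix (Fin n) (Fin n) ℂ) * D)).roots.toFinset.card = n := by
  classical
  set Am : Matrix (Fin n) (Fin n) ℂ := (A : Matrix (Fin n) (Fin n) ℂ) with hAm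
  have hAdet : Am.det ≠ 0 := by
    have hu : IsUnit Am := ⟨A, rfl⟩
    exact ((Matrix.isUnit_iff_isUnit_det Am).mp hu).ne_zero
  set P : (Fin n → ℂ) → ℂ[X] := fun d => (Am * diagonal d).charpoly with hP
  set r : (Fin n → ℂ) → ℕ := fun d => (P d).roots.toFinset.card with hr
  have hPmonic : ∀ d, (P d).Monic := fun d => charpoly_monic _
  have hP0 : ∀ d, P d ≠ 0 := fun d => (hPmonic d).ne_zero
  have hPnd : ∀ d, (P d).natDegree = n := fun d => by
    rw [hP]
    rw [charpoly_natDegree_eq_dim]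
    exact Fintype.card_fin n
  have hr_le : ∀ d, r d ≤ n := fun d =>
    le_trans (Multiset.toFinset_card_le _) (le_trans (card_roots' _) (le_of_eq (hPnd d)))
  set Q : ℕ → Prop := fun k => ∃ d : Fin n → ℂ, (∀ i, d i ≠ 0) ∧ r d = k with hQ
  have hQ1 : Q (r (fun _ => 1)) := ⟨fun _ => 1, fun _ => one_ne_zero, rfl⟩
  set m0 := Nat.findGreatest Q n with hm0
  have hQm0 : Q m0 := Nat.findGreatest_spec (hr_le _) hQ1
  obtain ⟨d, hdgood, hrd⟩ := hQm0
  by_cases hend : r d = n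
  · refine ⟨diagonal d, isDiag_diagonal d, ?_, hend⟩
    rw [Matrix.isUnit_iff_isUnit_det, det_diagonal, isUnit_iff_ne_zero]
    exact Finset.prod_ne_zero_iff.mpr (fun i _ => hdgood i)
  exfalso
  have hrdlt : r d < n := lt_of_le_of_ne (hr_le d) hend
  -- find a repeated root
  have hcardroots : (P d).roots.card = n := by rw [card_roots_eq, hPnd]
  have hnotnodup : ¬ (P d).roots.Nodup := by
    intro hnd
    rw [hr] at hrdlt
    simp only at hrdlt
    rw [Multiset.toFinset_card_of_nodup hnd, hcardroots] at hrdlt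
    exact lt_irrefl _ hrdlt
  obtain ⟨l, hl⟩ : ∃ a : ℂ, 1 < (P d).roots.count a := by
    rw [Multiset.nodup_iff_count_le_one] at hnotnodup
    push_neg at hnotnodup
    exact hnotnodup
  set m := rootMultiplicity l (P d) with hmdef
  have hm2 : 2 ≤ m := by
    have hcr : (P d).roots.count l = rootMultiplicity l (P d) := count_roots (P d)
    omega
  -- l is nonzero
  have hdet2 : (Am * diagonal d).det ≠ 0 := by
    rw [det_mul, det_diagonal]
    exact mul_ne_zero hAdet (Finset.prod_ne_zero_iff.mpr (fun i _ => hdgood i))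
  have hc0 : (P d).coeff 0 ≠ 0 := by
    intro h
    have hds := det_eq_sign_charpoly_coeff (Am * diagonal d)
    rw [show (Am * diagonal d).charpoly = P d from rfl, h, mul_zero] at hds
    exact hdet2 hds
  have hl0 : l ≠ 0 := by
    intro h0
    have hroot : (P d).IsRoot l := (rootMultiplicity_pos (hP0 d)).mp (by omega)
    rw [h0] at hroot
    rw [IsRoot, ← coeff_zero_eq_eval_zero] at hroot
    exact hc0 hroot
  -- every direction's pencil polynomial is divisible by (X - C l) ^ m
  have hclaim : ∀ j, (X - C l) ^ m ∣ betaM Am d j := by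
    intro j
    by_contra hdvd
    have hq0 : betaM Am d j ≠ 0 := by
      intro h
      exact hdvd (h ▸ dvd_zero _)
    have hupd1 : P (Function.update d j (d j + 1)) = alphaM Am d j - C (d j + 1) * betaM Am d j :=
      charpoly_update_eq Am d j (d j + 1)
    have hpeq : P d = alphaM Am d j - C (d j) * betaM Am d j := P_eq Am d j
    have hbeta : betaM Am d j = P d - P (Function.update d j (d j + 1)) := by
      rw [hupd1, hpeq, map_add, C_1]
      ring
    have hdd : (P d).degree = (P (Function.update d j (d j + 1))).degree := by
      rw [degree_eq_natDegree (hP0 _), degree_eq_natDegree (hP0 _), hPnd, hPnd]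
    have hdegβ : (betaM Am d j).degree < (P d).degree := by
      rw [hbeta]
      exact degree_sub_lt hdd (hP0 d) (by rw [(hPmonic _).leadingCoeff, (hPmonic _).leadingCoeff])
    obtain ⟨s, hsE, hcard⟩ := pen (P d) (betaM Am d j) (hPmonic d) hq0 hdegβ l hm2 hdvd {-(d j)}
    have hFs : P d - C s * betaM Am d j = P (Function.update d j (d j + s)) := by
      have h' : P (Function.update d j (d j + s))
          = alphaM Am d j - C (d j + s) * betaM Am d j := charpoly_update_eq Am d j (d j + s)
      rw [h', hpeq, map_add]
      ring
    have hgood' : ∀ i, Function.update d j (d j + s) i ≠ 0 := by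
      intro i
      by_cases hij : i = j
      · subst hij
        rw [Function.update_self]
        intro h0
        exact hsE (Finset.mem_singleton.mpr (eq_neg_of_add_eq_zero_right h0))
      · rw [Function.update_of_ne hij]
        exact hdgood i
    have hk : r (Function.update d j (d j + s)) ≤ m0 :=
      Nat.le_findGreatest (hr_le _) ⟨_, hgood', rfl⟩
    rw [hr] at hk
    simp only at hk
    rw [← hFs] at hk
    rw [hr] at hrd
    simp only at hrd
    omega
  -- Euler identity gives a contradiction
  have heuler : ∑ j, C (d j) * betaM Am d j
      = X * derivative (P d) - C (n : ℂ) * P d := euler_id Am d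
  have hdvdsum : (X - C l) ^ m ∣ X * derivative (P d) - C (n : ℂ) * P d := by
    rw [← heuler]
    exact Finset.dvd_sum (fun j _ => Dvd.dvd.mul_left (hclaim j) _)
  obtain ⟨u, hu, hund⟩ := (P d).exists_eq_pow_rootMultiplicity_mul_and_not_dvd (hP0 d) l
  rw [← hmdef] at hu
  have hm22 : m - 2 + 1 + 1 = m := by omega
  exact euler_contra (P d) u l hl0 (m - 2) n (by rw [hm22]; exact hu) hund
    (by rw [hm22]; exact hdvdsum)

end
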